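/- Every indecomposable finitely generated Gorenstein-projective Z[ε]-module is isomorphic to one given by an embedding (I ⊆ Z) for some ideal I of Z, and every finitely generated Gorenstein-projective Z[ε]-module is a direct sum of such indecomposables. -/

import Mathlib

/-- The differential of the Gorenstein-projective `ℤ[ε]`-module associated with a
subgroup embedding `A ⊆ B`: on the underlying group `A × B`, `ε · (a, b) = (0, a)`. -/
def eEmb {B : Type*} [AddCommGroup B] [Module ℤ B] (A : Submodule ℤ B) :
    (A × B) →ₗ[ℤ] (A × B) where
  toFun x := (0, (x.1 : B))
  map_add' x y := by simp [Prod.ext_iff]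
  map_smul' c x := by simp [Prod.ext_iff]

/-- Indecomposability of a differential structure `(N, e)` (a `ℤ[ε]`-module):
`N` is nonzero and any isomorphism onto a direct sum of differential structures has a
vanishing summand. -/
def DiffIndec (N : Type*) [AddCommGroup N] [Module ℤ N] (e : N →ₗ[ℤ] N) : Prop :=
  (¬ Subsingleton N) ∧
  ∀ (N₁ N₂ : Type) [AddCommGroup N₁] [AddCommGroup N₂] [Module ℤ N₁] [Module ℤ N₂]
    (e₁ : N₁ →ₗ[ℤ] N₁) (e₂ : N₂ →ₗ[ℤ] N₂) (φ : N ≃ₗ[ℤ] N₁ × N₂),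
    (∀ x, φ (e x) = (e₁ (φ x).1, e₂ (φ x).2)) → Subsingleton N₁ ∨ Subsingleton N₂

section Aux

/-- Zip a product of pi types into a pi of products, as an `AddEquiv`. -/
def zipAdd {ι : Type*} (G H : ι → Type*) [∀ i, AddCommGroup (G i)]
    [∀ i, AddCommGroup (H i)] :
    ((∀ i, G i) × (∀ i, H i)) ≃+ ∀ i, (G i × H i) where
  toFun p i := (p.1 i, p.2 i)
  invFun c := (fun i => (c i).1, fun i => (c i).2)
  map_add' _ _ := rfl
  left_inv _ := rfl
  right_inv _ := rfl

/-- Split off the first coordinate of a pi type over `Fin (k+1)`, as an `AddEquiv`. -/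
def consAdd {k : ℕ} (G : Fin (k + 1) → Type*) [∀ i, AddCommGroup (G i)] :
    (∀ i, G i) ≃+ G 0 × (∀ i : Fin k, G i.succ) where
  toFun c := (c 0, fun i => c i.succ)
  invFun p := Fin.cons p.1 p.2
  map_add' _ _ := rfl
  left_inv c := by
    funext i
    refine Fin.cases ?_ (fun j => ?_) i <;> simp
  right_inv p := by simp

/-- Drop a subsingleton right factor. -/
def dropRightAdd (P Q : Type*) [AddCommGroup P] [AddCommGroup Q] [Subsingleton Q] :
    (P × Q) ≃+ P where
  toFun x := x.1
  invFun p := (p, 0)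
  map_add' _ _ := rfl
  left_inv x := by ext <;> simp [Subsingleton.elim (0 : Q) x.2]
  right_inv p := rfl

/-- Drop a subsingleton left factor. -/
def dropLeftAdd (P Q : Type*) [AddCommGroup P] [AddCommGroup Q] [Subsingleton P] :
    (P × Q) ≃+ Q where
  toFun x := x.2
  invFun q := (0, q)
  map_add' _ _ := rfl
  left_inv x := by ext <;> simp [Subsingleton.elim (0 : P) x.1]
  right_inv q := rfl

/-- Upgrade an `AddEquiv` to a `ℤ`-linear equivalence w.r.t. arbitrary `ℤ`-module
structures. -/
def _root_.AddEquiv.toIntLE {M M₂ : Type*} [AddCommGroup M] [AddCommGroup M₂] [Module ℤ M] [Module ℤ M₂]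
    (e : M ≃+ M₂) : M ≃ₗ[ℤ] M₂ :=
  e.toLinearEquiv fun c x => by simpa using map_intCast_smul e.toAddMonoidHom ℤ ℤ c x

/-- The componentwise differential on a pi of `(I i × ℤ)`s. -/
def ePi {k : ℕ} (I : Fin k → Submodule ℤ ℤ) :
    (∀ i, ((I i) × ℤ)) →ₗ[ℤ] ∀ i, ((I i) × ℤ) :=
  LinearMap.pi fun i => (eEmb (I i)).comp (LinearMap.proj i)

/-- Part 1: decomposition of any `(A ⊆ B)` into coordinate ideals, via Smith normal form. -/
theorem part1 (B : Type) [AddCommGroup B] [Module ℤ B] [Module.Free ℤ B] [Module.Finite ℤ B]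
    (A : Submodule ℤ B) :
    ∃ (k : ℕ) (I : Fin k → Submodule ℤ ℤ)
      (φ : (A × B) ≃ₗ[ℤ] ((i : Fin k) → ((I i) × ℤ))),
      ∀ x (i : Fin k), φ (eEmb A x) i = eEmb (I i) (φ x i) := by
  classical
  letI instA : Module ℤ A := A.module
  obtain ⟨n, snf⟩ := A.smithNormalForm (Module.finBasis ℤ B)
  set k := Module.finrank ℤ B with hk
  set bM := snf.bM with hbM
  set I : Fin k → Submodule ℤ ℤ := fun i => A.map (bM.coord i) with hI
  have hmem : ∀ (x : A) (i : Fin k), bM.coord i (x : B) ∈ I i := fun x i => ⟨x, x.2, rfl⟩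
  set ψf : A → ∀ i, I i := fun x i => ⟨bM.coord i (x : B), hmem x i⟩ with hψf
  have hadd : ∀ x y : A, ψf (x + y) = ψf x + ψf y := by
    intro x y
    funext i
    apply Subtype.ext
    show bM.coord i ((↑(x + y) : B)) = bM.coord i (x : B) + bM.coord i (y : B)
    rw [Submodule.coe_add, map_add]
  have hinj : Function.Injective ψf := by
    intro x y hxy
    have hco : ∀ i, bM.coord i ((x : B) - (y : B)) = 0 := by
      intro i
      have h := congrArg (fun c => ((c i : ℤ))) hxy
      simp only [hψf] at h
      rw [map_sub]
      exact sub_eq_zero_of_eq h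
    exact Subtype.ext (sub_eq_zero.mp (bM.forall_coord_eq_zero_iff.mp hco))
  have hsurj : Function.Surjective ψf := by
    intro c
    have hwit : ∀ i, ∃ y : A, bM.coord i (y : B) = (c i : ℤ) := by
      intro i
      obtain ⟨y, hy, hy2⟩ := (c i).2
      exact ⟨⟨y, hy⟩, hy2⟩
    choose w hw using hwit
    set v : Fin n →₀ ℤ := ∑ j : Fin n, Finsupp.single j (snf.bN.repr (w (snf.f j)) j) with hv
    set x : A := snf.bN.repr.symm v with hxdef
    refine ⟨x, ?_⟩
    funext i
    apply Subtype.ext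
    show bM.coord i ((x : A) : B) = (c i : ℤ)
    rw [Module.Basis.coord_apply]
    have hxv : snf.bN.repr x = v := snf.bN.repr.apply_symm_apply v
    by_cases hi : i ∈ Set.range snf.f
    · obtain ⟨j₀, rfl⟩ := hi
      have hrepr : snf.bN.repr x j₀ = snf.bN.repr (w (snf.f j₀)) j₀ := by
        rw [hxv, hv]
        simp [Finsupp.single_apply]
      have h1 : bM.repr ((x : A) : B) (snf.f j₀) = snf.a j₀ * snf.bN.repr x j₀ := by
        have h := congrFun (snf.repr_comp_embedding_eq_smul x) j₀
        simp only [Function.comp_apply, Pi.smul_apply', Pi.smul_apply, smul_eq_mul] at h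
        exact h
      have h2 : bM.repr ((w (snf.f j₀) : A) : B) (snf.f j₀)
          = snf.a j₀ * snf.bN.repr (w (snf.f j₀)) j₀ := by
        have h := congrFun (snf.repr_comp_embedding_eq_smul (w (snf.f j₀))) j₀
        simp only [Function.comp_apply, Pi.smul_apply', Pi.smul_apply, smul_eq_mul] at h
        exact h
      have hw' : bM.repr ((w (snf.f j₀) : A) : B) (snf.f j₀) = (c (snf.f j₀) : ℤ) := by
        rw [← Module.Basis.coord_apply]
        exact hw _
      rw [h1, hrepr, ← h2, hw']
    · have h1 : bM.repr ((x : A) : B) i = 0 := snf.repr_eq_zero_of_notMem_range (m := x) hi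
      have h2 : ((c i : ℤ)) = 0 := by
        rw [← hw i, Module.Basis.coord_apply]
        exact snf.repr_eq_zero_of_notMem_range (m := w i) hi
      rw [h1, h2]
  set ψE : A ≃+ ∀ i, I i :=
    { Equiv.ofBijective ψf ⟨hinj, hsurj⟩ with map_add' := hadd } with hψE
  set Φ : (A × B) ≃+ ∀ i, ((I i) × ℤ) :=
    (ψE.prodCongr bM.equivFun.toAddEquiv).trans (zipAdd _ _) with hΦdef
  refine ⟨k, I, Φ.toIntLE, ?_⟩
  have hΦ : ∀ (y : A × B) (i : Fin k),
      Φ.toIntLE y i = (ψf y.1 i, bM.equivFun y.2 i) := fun y i => rfl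
  intro x i
  rw [hΦ, hΦ]
  show (ψf 0 i, bM.equivFun ((x.1 : A) : B) i) = (0, (ψf x.1 i : ℤ))
  refine Prod.ext ?_ ?_
  · apply Subtype.ext
    show bM.coord i (((0 : A) : B)) = 0
    simp
  · show bM.equivFun ((x.1 : A) : B) i = bM.coord i ((x.1 : A) : B)
    rw [Module.Basis.equivFun_apply, Module.Basis.coord_apply]

/-- Part 2 auxiliary: an indecomposable splitting into `k` factors has a single factor. -/
theorem part2aux (k : ℕ) :
    ∀ (N : Type) [AddCommGroup N] [Module ℤ N] (e : N →ₗ[ℤ] N), DiffIndec N e →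
    ∀ (I : Fin k → Submodule ℤ ℤ) (φ : N ≃ₗ[ℤ] ∀ i, ((I i) × ℤ)),
      (∀ x i, φ (e x) i = eEmb (I i) (φ x i)) →
      ∃ (J : Submodule ℤ ℤ) (φ' : N ≃ₗ[ℤ] (J × ℤ)), ∀ x, φ' (e x) = eEmb J (φ' x) := by
  induction k with
  | zero =>
    intro N _ _ e hind I φ _
    exact absurd (φ.toEquiv.subsingleton) hind.1
  | succ k ih =>
    intro N _ _ e hind I φ hφ
    let φ₁ : N ≃ₗ[ℤ] ((I 0 × ℤ) × ∀ i : Fin k, ((I i.succ) × ℤ)) :=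
      (φ.toAddEquiv.trans (consAdd fun i => (I i) × ℤ)).toIntLE
    have hφ₁ : ∀ x, φ₁ (e x) =
        (eEmb (I 0) ((φ₁ x).1), ePi (fun i => I i.succ) ((φ₁ x).2)) := by
      intro x
      have h1 : ∀ y, φ₁ y = (φ y 0, fun i : Fin k => φ y i.succ) := fun y => rfl
      rw [h1, h1]
      refine Prod.ext ?_ ?_
      · exact hφ x 0
      · funext i
        exact hφ x i.succ
    rcases hind.2 _ _ (eEmb (I 0)) (ePi fun i => I i.succ) φ₁ hφ₁ with h | h
    · -- left factor subsingleton: recurse on the right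
      let φ₂ : N ≃ₗ[ℤ] ∀ i : Fin k, ((I i.succ) × ℤ) :=
        (φ₁.toAddEquiv.trans (dropLeftAdd _ _)).toIntLE
      refine ih N e hind (fun i => I i.succ) φ₂ ?_
      intro x i
      have h2 : ∀ y, φ₂ y = (φ₁ y).2 := fun y => rfl
      rw [h2, h2, hφ₁ x]
      rfl
    · -- right factor subsingleton: done
      refine ⟨I 0, (φ₁.toAddEquiv.trans (dropRightAdd _ _)).toIntLE, ?_⟩
      intro x
      have h3 : ∀ y, (φ₁.toAddEquiv.trans (dropRightAdd _ _)).toIntLE y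
          = (φ₁ y).1 := fun y => rfl
      rw [h3, h3, hφ₁ x]

end Aux

theorem stmt8 :
    (∀ (B : Type) [AddCommGroup B] [Module ℤ B] [Module.Free ℤ B] [Module.Finite ℤ B]
      (A : Submodule ℤ B),
      ∃ (k : ℕ) (I : Fin k → Submodule ℤ ℤ)
        (φ : (A × B) ≃ₗ[ℤ] ((i : Fin k) → ((I i) × ℤ))),
        ∀ x (i : Fin k), φ (eEmb A x) i = eEmb (I i) (φ x i)) ∧
    (∀ (B : Type) [AddCommGroup B] [Module ℤ B] [Module.Free ℤ B] [Module.Finite ℤ B]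
      (A : Submodule ℤ B), DiffIndec (A × B) (eEmb A) →
      ∃ (I : Submodule ℤ ℤ) (φ : (A × B) ≃ₗ[ℤ] (I × ℤ)),
        ∀ x, φ (eEmb A x) = eEmb I (φ x)) := by
  constructor
  · exact part1
  · intro B _ _ _ _ A hind
    obtain ⟨k, I, φ, hφ⟩ := part1 B A
    exact part2aux k (A × B) (eEmb A) hind I φ (fun x i => hφ x i)
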